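/- For real constants c₁, c₂, c₃ with c₃ > 0, the function f(x) = 4c₃·cosh(c₁x + c₂)² satisfies the third order ODE f''' = (2f·f''·f' − (f')³)/f². -/

import Mathlib

theorem stmt_14 (c₁ c₂ c₃ : ℝ) (hc₃ : 0 < c₃) (f : ℝ → ℝ)
    (hf : f = fun x => 4 * c₃ * Real.cosh (c₁ * x + c₂) ^ 2) :
    ∀ x : ℝ, deriv (deriv (deriv f)) x =
      (2 * f x * deriv (deriv f) x * deriv f x - (deriv f x) ^ 3) / (f x) ^ 2 := by
  have hu : ∀ x : ℝ, HasDerivAt (fun x => c₁ * x + c₂) c₁ x := by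
    intro x
    simpa using ((hasDerivAt_id x).const_mul c₁).add_const c₂
  have h1 : ∀ x : ℝ, HasDerivAt f
      (8 * c₃ * c₁ * Real.cosh (c₁ * x + c₂) * Real.sinh (c₁ * x + c₂)) x := by
    intro x
    subst hf
    have := (((hu x).cosh).pow 2).const_mul (4 * c₃)
    exact this.congr_deriv (by ring)
  have hd1 : deriv f = fun x =>
      8 * c₃ * c₁ * Real.cosh (c₁ * x + c₂) * Real.sinh (c₁ * x + c₂) :=
    funext fun x => (h1 x).deriv
  have h2 : ∀ x : ℝ, HasDerivAt (deriv f)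
      (8 * c₃ * c₁ ^ 2 * (Real.sinh (c₁ * x + c₂) ^ 2 + Real.cosh (c₁ * x + c₂) ^ 2)) x := by
    intro x
    rw [hd1]
    have := (((hu x).cosh).mul ((hu x).sinh)).const_mul (8 * c₃ * c₁)
    refine (this.congr_deriv (by ring)).congr_of_eventuallyEq (Filter.Eventually.of_forall fun y => ?_)
    simp only [Pi.mul_apply]; ring
  have hd2 : deriv (deriv f) = fun x =>
      8 * c₃ * c₁ ^ 2 * (Real.sinh (c₁ * x + c₂) ^ 2 + Real.cosh (c₁ * x + c₂) ^ 2) :=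
    funext fun x => (h2 x).deriv
  have h3 : ∀ x : ℝ, HasDerivAt (deriv (deriv f))
      (32 * c₃ * c₁ ^ 3 * Real.sinh (c₁ * x + c₂) * Real.cosh (c₁ * x + c₂)) x := by
    intro x
    rw [hd2]
    have := ((((hu x).sinh).pow 2).add (((hu x).cosh).pow 2)).const_mul (8 * c₃ * c₁ ^ 2)
    exact this.congr_deriv (by ring)
  intro x
  rw [(h3 x).deriv, hd2, hd1, hf]
  simp only
  have hc : (0:ℝ) < Real.cosh (c₁ * x + c₂) := Real.cosh_pos _
  have hne : (4 * c₃ * Real.cosh (c₁ * x + c₂) ^ 2) ≠ 0 := by positivity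
  field_simp
  ring
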